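/- Expected per-crossing patching cost: fix a grid line ℓ of the dissection and a crossing point x of the pair of tours with ℓ, and for level i set α_i(x) = O(pro'(x)) if i ≤ θ(x) and α_i(x) = O((L/(2^i r))² / pro'(x)) otherwise, where θ(x) = log(L / (r · pro'(x))) and pro'(x) is the relaxed proximity of x. Then, using that the probability that ℓ has level i is at most 2^i / L for 0 ≤ i ≤ 1 + log L, the expected patching cost attributed to x satisfies Σ_{i=0}^{1+log L} Pr[ℓ has level i] · α_i(x) = O(1/r). -/

import Mathlib

/-!
STATEMENT 19: Expected per-crossing patching cost.

Fix a grid line ℓ of the dissection and a crossing point x of the pair of tours with ℓ,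
let pro = pro'(x) > 0 be its relaxed proximity, and set θ(x) = log₂(L / (r·pro)).  For
level i the patching cost attributed to x is α_i(x) = O(pro) if i ≤ θ(x) and
α_i(x) = O((L/(2^i·r))² / pro) otherwise (the constants hidden in the O's being c₁
and c₂).  Using that the probability that ℓ has level i is at most 2^i / L for
0 ≤ i ≤ 1 + log L, the expected patching cost attributed to x is

  Σ_{i=0}^{1+log L} Pr[ℓ has level i] · α_i(x) = O(1/r).
-/

open Set

theorem expected_per_crossing_patching_cost :
    ∃ C : ℝ, 0 < C ∧
      ∀ (c₁ c₂ : ℝ) (L r : ℕ) (pro : ℝ) (p α : ℕ → ℝ),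
        0 ≤ c₁ → 0 ≤ c₂ →
        (∃ k : ℕ, L = 2 ^ k) → 1 ≤ r → 0 < pro →
        (∀ i, 0 ≤ p i) → (∀ i, 0 ≤ α i) →
        -- the probability that ℓ has level i is at most 2^i / L
        (∀ i : ℕ, (i : ℝ) ≤ 1 + Real.logb 2 (L : ℝ) → p i ≤ 2 ^ i / (L : ℝ)) →
        -- α_i(x) = O(pro'(x)) for i ≤ θ(x) …
        (∀ i : ℕ, (i : ℝ) ≤ Real.logb 2 ((L : ℝ) / ((r : ℝ) * pro)) →
          α i ≤ c₁ * pro) →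
        -- … and α_i(x) = O((L/(2^i r))² / pro'(x)) for i > θ(x)
        (∀ i : ℕ, Real.logb 2 ((L : ℝ) / ((r : ℝ) * pro)) < (i : ℝ) →
          α i ≤ c₂ * (((L : ℝ) / (2 ^ i * (r : ℝ))) ^ 2 / pro)) →
        -- the expected patching cost attributed to x is O(1/r)
        ∑ i ∈ Finset.range (⌊1 + Real.logb 2 (L : ℝ)⌋₊ + 1), p i * α i ≤
          C * (c₁ + c₂) / (r : ℝ) := by
  refine ⟨2, by norm_num, ?_⟩
  intro c₁ c₂ L r pro p α hc₁ hc₂ hL hr hpro hp0 hα0 hp hα₁ hα₂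
  obtain ⟨k, rfl⟩ := hL
  set Lr : ℝ := ((2 ^ k : ℕ) : ℝ) with hLr
  have hLpos : (0:ℝ) < Lr := by positivity
  have hrpos : (0:ℝ) < (r:ℝ) := by exact_mod_cast Nat.lt_of_lt_of_le Nat.zero_lt_one hr
  set t : ℝ := Real.logb 2 (Lr / ((r:ℝ) * pro)) with htdef
  have hargpos : (0:ℝ) < Lr / ((r:ℝ) * pro) := by positivity
  have ht2 : (2:ℝ) ^ t = Lr / ((r:ℝ) * pro) :=
    Real.rpow_logb (by norm_num) (by norm_num) hargpos
  set M : ℕ := if t < 0 then 0 else ⌊t⌋₊ + 1 with hMdef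
  have hMle : ∀ i : ℕ, i < M → (i:ℝ) ≤ t := by
    intro i hi
    by_cases h : t < 0
    · simp [hMdef, h] at hi
    · have hM : M = ⌊t⌋₊ + 1 := by simp [hMdef, h]
      have : i ≤ ⌊t⌋₊ := by omega
      calc (i:ℝ) ≤ (⌊t⌋₊ : ℝ) := by exact_mod_cast this
        _ ≤ t := Nat.floor_le (not_lt.1 h)
  have hMgt : ∀ i : ℕ, M ≤ i → t < (i:ℝ) := by
    intro i hi
    by_cases h : t < 0
    · exact lt_of_lt_of_le h (by positivity)
    · have hM : M = ⌊t⌋₊ + 1 := by simp [hMdef, h]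
      calc t < (⌊t⌋₊ : ℝ) + 1 := Nat.lt_floor_add_one t
        _ ≤ (i:ℝ) := by exact_mod_cast by omega
  have hK1 : (2:ℝ) ^ M - 1 ≤ 2 * (2:ℝ) ^ t := by
    by_cases h : t < 0
    · have : (2:ℝ) ^ M = 1 := by simp [hMdef, h]
      rw [this]
      have h2t : (0:ℝ) < (2:ℝ) ^ t := Real.rpow_pos_of_pos (by norm_num) t
      linarith
    · have hM : M = ⌊t⌋₊ + 1 := by simp [hMdef, h]
      have h1 : ((⌊t⌋₊ : ℕ) : ℝ) ≤ t := Nat.floor_le (not_lt.1 h)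
      have h2 : (2:ℝ) ^ (⌊t⌋₊ : ℕ) ≤ (2:ℝ) ^ t := by
        rw [← Real.rpow_natCast 2 ⌊t⌋₊]
        exact Real.rpow_le_rpow_of_exponent_le one_le_two h1
      rw [hM, pow_succ]
      nlinarith
  have hK2 : (2:ℝ) ^ t ≤ (2:ℝ) ^ M := by
    by_cases h : t < 0
    · have : (2:ℝ) ^ M = 1 := by simp [hMdef, h]
      rw [this, ← Real.rpow_zero 2]
      exact Real.rpow_le_rpow_of_exponent_le one_le_two h.le
    · have hM : M = ⌊t⌋₊ + 1 := by simp [hMdef, h]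
      rw [← Real.rpow_natCast 2 M]
      apply Real.rpow_le_rpow_of_exponent_le one_le_two
      rw [hM]
      push_cast
      exact (Nat.lt_floor_add_one t).le
  set N : ℕ := ⌊1 + Real.logb 2 Lr⌋₊ + 1 with hNdef
  have hlogL : 0 ≤ Real.logb 2 Lr := by
    apply Real.logb_nonneg one_lt_two
    have h1 : (1:ℕ) ≤ 2 ^ k := Nat.one_le_two_pow
    rw [hLr]; exact_mod_cast h1
  have hiN : ∀ i : ℕ, i < N → (i:ℝ) ≤ 1 + Real.logb 2 Lr := by
    intro i hi
    have h1 : i ≤ ⌊1 + Real.logb 2 Lr⌋₊ := by omega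
    calc (i:ℝ) ≤ (⌊1 + Real.logb 2 Lr⌋₊ : ℝ) := by exact_mod_cast h1
      _ ≤ 1 + Real.logb 2 Lr := Nat.floor_le (by linarith)
  -- per-term bounds
  have hterm1 : ∀ i : ℕ, i < N → i < M →
      p i * α i ≤ (c₁ * pro / Lr) * 2 ^ i := by
    intro i hiN' hiM
    have h1 : p i ≤ 2 ^ i / Lr := hp i (hiN i hiN')
    have h2 : α i ≤ c₁ * pro := hα₁ i (hMle i hiM)
    have := mul_le_mul h1 h2 (hα0 i) (by positivity)
    calc p i * α i ≤ (2 ^ i / Lr) * (c₁ * pro) := this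
      _ = (c₁ * pro / Lr) * 2 ^ i := by ring
  have hterm2 : ∀ i : ℕ, i < N → M ≤ i →
      p i * α i ≤ (c₂ * Lr / ((r:ℝ) ^ 2 * pro)) * ((1:ℝ)/2) ^ i := by
    intro i hiN' hiM
    have h1 : p i ≤ 2 ^ i / Lr := hp i (hiN i hiN')
    have h2 : α i ≤ c₂ * ((Lr / (2 ^ i * (r:ℝ))) ^ 2 / pro) := hα₂ i (hMgt i hiM)
    have h3 := mul_le_mul h1 h2 (hα0 i) (by positivity)
    have h2pow : (0:ℝ) < (2:ℝ) ^ i := by positivity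
    calc p i * α i ≤ (2 ^ i / Lr) * (c₂ * ((Lr / (2 ^ i * (r:ℝ))) ^ 2 / pro)) := h3
      _ = (c₂ * Lr / ((r:ℝ) ^ 2 * pro)) * ((1:ℝ)/2) ^ i := by
          rw [one_div, inv_pow]
          field_simp
  have hApos : (0:ℝ) ≤ c₁ * pro / Lr := by positivity
  have hBpos : (0:ℝ) ≤ c₂ * Lr / ((r:ℝ) ^ 2 * pro) := by positivity
  have hA_bound : (c₁ * pro / Lr) * ((2:ℝ) ^ M - 1) ≤ 2 * c₁ / (r:ℝ) := by
    have := mul_le_mul_of_nonneg_left hK1 hApos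
    calc (c₁ * pro / Lr) * ((2:ℝ) ^ M - 1)
        ≤ (c₁ * pro / Lr) * (2 * (2:ℝ) ^ t) := this
      _ = 2 * c₁ / (r:ℝ) := by
          rw [ht2]; field_simp
  have hB_bound : (c₂ * Lr / ((r:ℝ) ^ 2 * pro)) * (2 * ((1:ℝ)/2) ^ M) ≤ 2 * c₂ / (r:ℝ) := by
    have h2Mpos : (0:ℝ) < (2:ℝ) ^ M := by positivity
    have h2tpos : (0:ℝ) < (2:ℝ) ^ t := Real.rpow_pos_of_pos (by norm_num) t
    have hinv : ((1:ℝ)/2) ^ M ≤ ((r:ℝ) * pro) / Lr := by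
      rw [div_pow, one_pow]
      rw [div_le_div_iff₀ h2Mpos hLpos]
      have : Lr = (2:ℝ) ^ t * ((r:ℝ) * pro) := by
        rw [ht2]; field_simp
      rw [this]
      nlinarith [mul_le_mul_of_nonneg_right hK2 (le_of_lt (mul_pos hrpos hpro))]
    calc (c₂ * Lr / ((r:ℝ) ^ 2 * pro)) * (2 * ((1:ℝ)/2) ^ M)
        ≤ (c₂ * Lr / ((r:ℝ) ^ 2 * pro)) * (2 * (((r:ℝ) * pro) / Lr)) := by
          apply mul_le_mul_of_nonneg_left _ hBpos
          linarith
      _ = 2 * c₂ / (r:ℝ) := by field_simp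
  -- split the sum
  set m : ℕ := min M N with hmdef
  have hmN : m ≤ N := min_le_right M N
  rw [← Finset.sum_range_add_sum_Ico (fun i => p i * α i) hmN]
  have hS1 : ∑ i ∈ Finset.range m, p i * α i ≤ 2 * c₁ / (r:ℝ) := by
    have h1 : ∑ i ∈ Finset.range m, p i * α i
        ≤ ∑ i ∈ Finset.range m, (c₁ * pro / Lr) * 2 ^ i := by
      apply Finset.sum_le_sum
      intro i hi
      rw [Finset.mem_range] at hi
      exact hterm1 i (lt_of_lt_of_le hi hmN) (lt_of_lt_of_le hi (min_le_left M N))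
    have h2 : ∑ i ∈ Finset.range m, (c₁ * pro / Lr) * 2 ^ i
        = (c₁ * pro / Lr) * ((2:ℝ) ^ m - 1) := by
      rw [← Finset.mul_sum, geom_sum_eq (by norm_num : (2:ℝ) ≠ 1)]
      norm_num
    have h3 : (2:ℝ) ^ m - 1 ≤ (2:ℝ) ^ M - 1 := by
      have : (2:ℝ) ^ m ≤ (2:ℝ) ^ M :=
        pow_le_pow_right₀ one_le_two (min_le_left M N)
      linarith
    calc ∑ i ∈ Finset.range m, p i * α i
        ≤ (c₁ * pro / Lr) * ((2:ℝ) ^ m - 1) := by rw [← h2]; exact h1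
      _ ≤ (c₁ * pro / Lr) * ((2:ℝ) ^ M - 1) := mul_le_mul_of_nonneg_left h3 hApos
      _ ≤ 2 * c₁ / (r:ℝ) := hA_bound
  have hS2 : ∑ i ∈ Finset.Ico m N, p i * α i ≤ 2 * c₂ / (r:ℝ) := by
    have h1 : ∑ i ∈ Finset.Ico m N, p i * α i
        ≤ ∑ i ∈ Finset.Ico m N, (c₂ * Lr / ((r:ℝ) ^ 2 * pro)) * ((1:ℝ)/2) ^ i := by
      apply Finset.sum_le_sum
      intro i hi
      rw [Finset.mem_Ico] at hi
      have hMi : M ≤ i := by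
        rcases le_or_gt M N with h | h
        · have : m = M := min_eq_left h
          omega
        · have : m = N := min_eq_right h.le
          omega
      exact hterm2 i hi.2 hMi
    have h2 : ∑ i ∈ Finset.Ico m N, (c₂ * Lr / ((r:ℝ) ^ 2 * pro)) * ((1:ℝ)/2) ^ i
        = (c₂ * Lr / ((r:ℝ) ^ 2 * pro)) * ((((1:ℝ)/2) ^ N - ((1:ℝ)/2) ^ m) / ((1:ℝ)/2 - 1)) := by
      rw [← Finset.mul_sum, geom_sum_Ico (by norm_num : ((1:ℝ)/2) ≠ 1) hmN]
    have h3 : (((1:ℝ)/2) ^ N - ((1:ℝ)/2) ^ m) / ((1:ℝ)/2 - 1) ≤ 2 * ((1:ℝ)/2) ^ M := by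
      have hNpos : (0:ℝ) < ((1:ℝ)/2) ^ N := by positivity
      have hmM : ((1:ℝ)/2) ^ m ≤ ((1:ℝ)/2) ^ M + ((1:ℝ)/2) ^ N := by
        rcases le_or_gt M N with h | h
        · have : m = M := min_eq_left h
          rw [this]; linarith
        · have : m = N := min_eq_right h.le
          rw [this]; linarith [pow_pos (by norm_num : (0:ℝ) < 1/2) M]
      have : (((1:ℝ)/2) ^ N - ((1:ℝ)/2) ^ m) / ((1:ℝ)/2 - 1)
          = 2 * (((1:ℝ)/2) ^ m - ((1:ℝ)/2) ^ N) := by ring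
      rw [this]
      linarith
    calc ∑ i ∈ Finset.Ico m N, p i * α i
        ≤ (c₂ * Lr / ((r:ℝ) ^ 2 * pro)) * ((((1:ℝ)/2) ^ N - ((1:ℝ)/2) ^ m) / ((1:ℝ)/2 - 1)) := by
          rw [← h2]; exact h1
      _ ≤ (c₂ * Lr / ((r:ℝ) ^ 2 * pro)) * (2 * ((1:ℝ)/2) ^ M) :=
          mul_le_mul_of_nonneg_left h3 hBpos
      _ ≤ 2 * c₂ / (r:ℝ) := hB_bound
  have : (2:ℝ) * (c₁ + c₂) / (r:ℝ) = 2 * c₁ / (r:ℝ) + 2 * c₂ / (r:ℝ) := by ring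
  rw [this]
  exact add_le_add hS1 hS2
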